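/- Let d ≥ 1 and 1 ≤ N ≤ M, with P₊^{(k)} the symmetrizer on (Fin k → Fin d) and d₊^{(k)} = C(d+k−1,k). Let Clone be the universal cloning map Clone(ν) := (d₊^{(N)}/d₊^{(M)}) · P₊^{(M)} ((P₊^{(N)} ν P₊^{(N)}) ⊗ I) P₊^{(M)} from matrices on (Fin N → Fin d) to matrices on (Fin M → Fin d), and TrCh the partial trace map TrCh(μ) := P₊^{(N)} (partial trace over the last M−N factors of P₊^{(M)} μ P₊^{(M)}) P₊^{(N)} in the opposite direction. Define the Choi matrix of a linear map 𝓔 on matrices by Choi(𝓔)((f,g),(f',g')) := (𝓔 E_{g,g'})(f,f'), where E_{g,g'} is the matrix unit. Then for all f, f' : Fin M → Fin d and g, g' : Fin N → Fin d: Choi(Clone)((f,g),(f',g')) = (d₊^{(N)}/d₊^{(M)}) · Choi(TrCh)((g,f),(g',f')). (The Choi matrix of universal cloning equals d₊^{(N)}/d₊^{(M)} times the Choi matrix of the partial trace channel with input and output factors swapped.) -/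

import Mathlib

open Matrix
open scoped Kronecker ComplexOrder

/-- The permutation matrix on the k-fold tensor power of ℂ^d associated to a
permutation π of the tensor factors. -/
noncomputable def permMat (d k : ℕ) (π : Equiv.Perm (Fin k)) :
    Matrix (Fin k → Fin d) (Fin k → Fin d) ℂ :=
  Matrix.of fun f g => if g = f ∘ π then 1 else 0

/-- The symmetrizer: the orthogonal projection onto the symmetric subspace of the
k-fold tensor power of ℂ^d. -/
noncomputable def symProj (d k : ℕ) : Matrix (Fin k → Fin d) (Fin k → Fin d) ℂ :=
  (1 / (Nat.factorial k : ℂ)) • ∑ π : Equiv.Perm (Fin k), permMat d k π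

/-- Restriction of g : Fin M → Fin d to the first N tensor factors (N ≤ M). -/
def headN (d N M : ℕ) (hNM : N ≤ M) (g : Fin M → Fin d) : Fin N → Fin d :=
  fun i => g ⟨i, lt_of_lt_of_le i.isLt hNM⟩

/-- Restriction of g : Fin M → Fin d to the last M - N tensor factors. -/
def tailN (d N M : ℕ) (hNM : N ≤ M) (g : Fin M → Fin d) : Fin (M - N) → Fin d :=
  fun i => g ⟨N + i, by have := i.isLt; omega⟩

/-- Concatenation of f : Fin N → Fin d with h : Fin (M-N) → Fin d, under the
identification of Fin M with Fin N ⊕ Fin (M-N). -/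
def concatN (d N M : ℕ) (hNM : N ≤ M) (f : Fin N → Fin d) (h : Fin (M - N) → Fin d) :
    Fin M → Fin d :=
  fun i => if hi : (i : ℕ) < N then f ⟨i, hi⟩
    else h ⟨(i : ℕ) - N, by have := i.isLt; omega⟩

/-- The matrix A ⊗ I on the M-fold tensor power, where A acts on the first N factors
and the identity on the last M - N factors. -/
noncomputable def extendN (d N M : ℕ) (hNM : N ≤ M)
    (A : Matrix (Fin N → Fin d) (Fin N → Fin d) ℂ) :
    Matrix (Fin M → Fin d) (Fin M → Fin d) ℂ :=
  Matrix.of fun f g =>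
    A (headN d N M hNM f) (headN d N M hNM g) *
      (if tailN d N M hNM f = tailN d N M hNM g then 1 else 0)

/-- The optimal universal cloning map from N to M ≥ N copies:
Clone(ν) = (d₊^{(N)}/d₊^{(M)}) · P₊^{(M)} ((P₊^{(N)} ν P₊^{(N)}) ⊗ I) P₊^{(M)}. -/
noncomputable def Clone (d N M : ℕ) (hNM : N ≤ M)
    (ν : Matrix (Fin N → Fin d) (Fin N → Fin d) ℂ) :
    Matrix (Fin M → Fin d) (Fin M → Fin d) ℂ :=
  ((Nat.choose (d + N - 1) N : ℂ) / (Nat.choose (d + M - 1) M : ℂ)) •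
    (symProj d M * extendN d N M hNM (symProj d N * ν * symProj d N) * symProj d M)

/-- The partial trace over the last M - N tensor factors. -/
noncomputable def ptraceN (d N M : ℕ) (hNM : N ≤ M)
    (A : Matrix (Fin M → Fin d) (Fin M → Fin d) ℂ) :
    Matrix (Fin N → Fin d) (Fin N → Fin d) ℂ :=
  Matrix.of fun f g =>
    ∑ h : Fin (M - N) → Fin d, A (concatN d N M hNM f h) (concatN d N M hNM g h)

/-- The symmetric partial trace channel from M to N ≤ M copies:
TrCh(μ) = P₊^{(N)} Tr_{N+1,…,M}[P₊^{(M)} μ P₊^{(M)}] P₊^{(N)}. -/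
noncomputable def TrCh (d N M : ℕ) (hNM : N ≤ M)
    (μ : Matrix (Fin M → Fin d) (Fin M → Fin d) ℂ) :
    Matrix (Fin N → Fin d) (Fin N → Fin d) ℂ :=
  symProj d N * ptraceN d N M hNM (symProj d M * μ * symProj d M) * symProj d N

lemma symProj_symm (d k : ℕ) (x y : Fin k → Fin d) :
    symProj d k x y = symProj d k y x := by
  simp only [symProj, Matrix.smul_apply, Matrix.sum_apply, permMat, of_apply, smul_eq_mul]
  congr 1
  refine Fintype.sum_equiv (Equiv.inv _) _ _ fun π => ?_
  congr 1
  simp only [eq_iff_iff, Equiv.inv_apply]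
  constructor
  · rintro rfl; funext i
    simp [Function.comp]
  · rintro rfl; funext i
    simp [Function.comp]

lemma head_concat (d N M : ℕ) (hNM : N ≤ M) (x : Fin N → Fin d) (h : Fin (M-N) → Fin d) :
    headN d N M hNM (concatN d N M hNM x h) = x := by
  funext i; simp [headN, concatN, i.isLt]

lemma tail_concat (d N M : ℕ) (hNM : N ≤ M) (x : Fin N → Fin d) (h : Fin (M-N) → Fin d) :
    tailN d N M hNM (concatN d N M hNM x h) = h := by
  funext i
  simp only [tailN, concatN]
  rw [dif_neg (by simp)]
  congr 1
  exact Fin.ext (by simp)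

lemma concat_head_tail (d N M : ℕ) (hNM : N ≤ M) (a : Fin M → Fin d) :
    concatN d N M hNM (headN d N M hNM a) (tailN d N M hNM a) = a := by
  funext i
  by_cases hi : (i:ℕ) < N
  · simp [concatN, headN, hi]
  · rw [concatN, dif_neg hi]
    simp only [headN, tailN]
    congr 1
    exact Fin.ext (by simp; omega)

def pairEquiv (d N M : ℕ) (hNM : N ≤ M) :
    ((Fin N → Fin d) × (Fin (M - N) → Fin d)) ≃ (Fin M → Fin d) where
  toFun p := concatN d N M hNM p.1 p.2
  invFun a := (headN d N M hNM a, tailN d N M hNM a)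
  left_inv p := by simp [head_concat, tail_concat]
  right_inv a := concat_head_tail d N M hNM a

lemma mul_std_mul {n : Type*} [Fintype n] [DecidableEq n] (A B : Matrix n n ℂ)
    (g g' x y : n) :
    (A * single g g' (1:ℂ) * B) x y = A x g * B g' y := by
  simp only [Matrix.mul_apply, Matrix.single, of_apply, ite_and, mul_ite, ite_mul,
    zero_mul, mul_zero, mul_one, Finset.sum_ite_eq, Finset.sum_ite_eq', Finset.mem_univ,
    if_true]

lemma triple_mul_apply {n : Type*} [Fintype n] (A B C : Matrix n n ℂ) (x y : n) :
    (A * B * C) x y = ∑ b, ∑ a, A x a * B a b * C b y := by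
  simp [Matrix.mul_apply, Finset.sum_mul]

/-- The Choi matrix of universal cloning equals d₊^{(N)}/d₊^{(M)} times the Choi matrix
of the partial trace channel with input and output factors swapped. -/
theorem clone_trace_choi_duality (d N M : ℕ) (hd : 1 ≤ d) (hN : 1 ≤ N) (hNM : N ≤ M)
    (f f' : Fin M → Fin d) (g g' : Fin N → Fin d) :
    Clone d N M hNM (single g g' (1 : ℂ)) f f' =
      ((Nat.choose (d + N - 1) N : ℂ) / (Nat.choose (d + M - 1) M : ℂ)) *
        TrCh d N M hNM (single f f' (1 : ℂ)) g g' := by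
  rw [Clone, TrCh, Matrix.smul_apply, smul_eq_mul]
  congr 1
  have hX : ∀ (x y : Fin N → Fin d) (h h' : Fin (M - N) → Fin d),
      extendN d N M hNM (symProj d N * single g g' 1 * symProj d N)
          (concatN d N M hNM x h) (concatN d N M hNM y h') =
        symProj d N x g * symProj d N g' y * (if h = h' then 1 else 0) := by
    intro x y h h'
    simp [extendN, head_concat, tail_concat, mul_std_mul, mul_assoc]
  have hY : ∀ (u v : Fin N → Fin d),
      ptraceN d N M hNM (symProj d M * single f f' 1 * symProj d M) u v =
        ∑ h, symProj d M (concatN d N M hNM u h) f *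
          symProj d M f' (concatN d N M hNM v h) := by
    intro u v; simp [ptraceN, mul_std_mul]
  rw [triple_mul_apply, triple_mul_apply]
  set e := pairEquiv d N M hNM with he
  calc
    ∑ b, ∑ a, symProj d M f a *
        extendN d N M hNM (symProj d N * single g g' 1 * symProj d N) a b *
        symProj d M b f'
      = ∑ q : (Fin N → Fin d) × (Fin (M - N) → Fin d),
          ∑ p : (Fin N → Fin d) × (Fin (M - N) → Fin d),
          symProj d M f (e p) *
            extendN d N M hNM (symProj d N * single g g' 1 * symProj d N)
              (e p) (e q) * symProj d M (e q) f' := by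
        rw [← Equiv.sum_comp e]
        exact Finset.sum_congr rfl fun q _ => (Equiv.sum_comp e _).symm
    _ = ∑ y, ∑ h', ∑ x, ∑ h,
          symProj d M f (concatN d N M hNM x h) *
            (symProj d N x g * symProj d N g' y * (if h = h' then 1 else 0)) *
            symProj d M (concatN d N M hNM y h') f' := by
        simp only [Fintype.sum_prod_type, he, pairEquiv, Equiv.coe_fn_mk, hX]
    _ = ∑ y, ∑ h', ∑ x,
          symProj d M f (concatN d N M hNM x h') *
            (symProj d N x g * symProj d N g' y) *
            symProj d M (concatN d N M hNM y h') f' := by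
        refine Finset.sum_congr rfl fun y _ => Finset.sum_congr rfl fun h' _ =>
          Finset.sum_congr rfl fun x _ => ?_
        simp [mul_ite, ite_mul, Finset.sum_ite_eq', mul_assoc]
    _ = ∑ v, ∑ u, symProj d N g u *
          ptraceN d N M hNM (symProj d M * single f f' 1 * symProj d M) u v *
          symProj d N v g' := by
        refine Finset.sum_congr rfl fun v _ => ?_
        rw [Finset.sum_comm]
        refine Finset.sum_congr rfl fun u _ => ?_
        rw [hY, Finset.mul_sum, Finset.sum_mul]
        refine Finset.sum_congr rfl fun h _ => ?_
        rw [symProj_symm d N g u, symProj_symm d M f' (concatN d N M hNM v h),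
          symProj_symm d N v g']
        rw [symProj_symm d M f (concatN d N M hNM u h)]; ring
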